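/- In the setting of the discrete Euler scheme with $1 \le p < \gamma \le 2$ (superadditive control $\omega_{kl}$, points $x_k$ with $|x_l - x_k|^p \le \omega_{kl}$, coefficients $f$ bounded by $M_0$ with Hölder-$(\gamma-1)$ constant $M_0$, and in addition $f$ differentiable with $|Df| \le M_0$ and $|Df(y)-Df(z)| \le M_0|y-z|^{\gamma-1}$), let $y_k$ and $\tilde{y}_k$ be the Euler iterates $y_{k+1} = y_k + f(y_k)(x_{k+1}-x_k)$ starting from initial values $y_0$ and $\tilde{y}_0$ respectively. Then there exists $M' > 0$, depending only on $n, d, \gamma, p, \omega_{0K}$ and $M_0$, such that $|\tilde{y}_k - y_k| \le M' \max_i |\tilde{y}^i_0 - y^i_0|$ for all $0 \le k \le K$. -/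

import Mathlib

open Finset

private lemma ea_rpow_add_le (a b e : ℝ) (ha : 0 ≤ a) (hb : 0 ≤ b) (he0 : 0 ≤ e) (he1 : e ≤ 1) :
    (a + b) ^ e ≤ a ^ e + b ^ e := by
  lift a to NNReal using ha
  lift b to NNReal using hb
  have h := NNReal.rpow_add_le_add_rpow a b he0 he1
  have := NNReal.coe_le_coe.2 h
  push_cast [NNReal.coe_rpow] at this
  exact_mod_cast this

private lemma ea_rpow_exp_ge (x a b : ℝ) (hx0 : 0 ≤ x) (hx1 : x ≤ 1) (hb : 0 < b) (hba : b ≤ a) :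
    x ^ a ≤ x ^ b := by
  rcases hx0.eq_or_lt with h | h
  · rw [← h, Real.zero_rpow (by linarith), Real.zero_rpow (by linarith)]
  · exact Real.rpow_le_rpow_of_exponent_ge h hx1 hba

private lemma ea_rpow_le_add_one (s e : ℝ) (hs : 0 ≤ s) (he0 : 0 ≤ e) (he1 : e ≤ 1) :
    s ^ e ≤ s + 1 := by
  rcases le_total s 1 with h | h
  · have := Real.rpow_le_one hs h he0
    linarith
  · have : s ^ e ≤ s ^ (1 : ℝ) := Real.rpow_le_rpow_of_exponent_le h he1
    rw [Real.rpow_one] at this; linarith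

private lemma ea_abs_sum_mul_le (d : ℕ) (c e : Fin d → ℝ) (Mc Me : ℝ) (hMc : 0 ≤ Mc)
    (hc : ∀ j, |c j| ≤ Mc) (he : ∀ j, |e j| ≤ Me) :
    |∑ j, c j * e j| ≤ d * (Mc * Me) := by
  calc |∑ j, c j * e j| ≤ ∑ j, |c j * e j| := Finset.abs_sum_le_sum_abs _ _
    _ ≤ ∑ _j : Fin d, Mc * Me := Finset.sum_le_sum fun j _ => by
        rw [abs_mul]; exact mul_le_mul (hc j) (he j) (abs_nonneg _) hMc
    _ = d * (Mc * Me) := by simp [Finset.sum_const, Finset.card_univ, nsmul_eq_mul]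

private lemma ea_mv_lip {n : ℕ} {M : ℝ} (f : (Fin n → ℝ) → ℝ) (hf : Differentiable ℝ f)
    (hD : ∀ v, ‖fderiv ℝ f v‖ ≤ M) (a b : Fin n → ℝ) : |f b - f a| ≤ M * ‖b - a‖ := by
  have := Convex.norm_image_sub_le_of_norm_fderiv_le (s := Set.univ)
    (fun x _ => hf x) (fun x _ => hD x) convex_univ
    (Set.mem_univ a) (Set.mem_univ b)
  simpa [Real.norm_eq_abs] using this

private lemma ea_hdiff {n : ℕ} {γ M : ℝ} (f : (Fin n → ℝ) → ℝ)
    (hf : Differentiable ℝ f) (hD : ∀ v, ‖fderiv ℝ f v‖ ≤ M)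
    (hDh : ∀ v w, ‖fderiv ℝ f v - fderiv ℝ f w‖ ≤ M * ‖v - w‖ ^ (γ - 1))
    (a a' b b' : Fin n → ℝ) :
    |f b' - f a' - (f b - f a)| ≤ M * ‖b' - a' - (b - a)‖ + M * ‖a' - a‖ ^ (γ - 1) * ‖b - a‖ := by
  set z : Fin n → ℝ := b - a with hz
  set z' : Fin n → ℝ := b' - a' with hz'
  have h1 : |f b' - f (a' + z)| ≤ M * ‖z' - z‖ := by
    have := ea_mv_lip f hf hD (a' + z) b'
    have e : b' - (a' + z) = z' - z := by rw [hz, hz']; abel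
    rwa [e] at this
  have hρ : ∀ w : Fin n → ℝ, HasFDerivAt (fun w => f (a' + w) - f (a + w))
      (fderiv ℝ f (a' + w) - fderiv ℝ f (a + w)) w := by
    intro w
    have c1 : HasFDerivAt (fun w : Fin n → ℝ => f (a' + w)) (fderiv ℝ f (a' + w)) w := by
      have comp := (hf (a' + w)).hasFDerivAt.comp w ((hasFDerivAt_id w).const_add a')
      simp at comp; exact comp
    have c2 : HasFDerivAt (fun w : Fin n → ℝ => f (a + w)) (fderiv ℝ f (a + w)) w := by
      have comp := (hf (a + w)).hasFDerivAt.comp w ((hasFDerivAt_id w).const_add a)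
      simp at comp; exact comp
    exact c1.sub c2
  have h2 : |f (a' + z) - f (a + z) - (f (a' + 0) - f (a + 0))|
      ≤ M * ‖a' - a‖ ^ (γ - 1) * ‖z - 0‖ := by
    have := Convex.norm_image_sub_le_of_norm_hasFDerivWithin_le (s := Set.univ)
      (f' := fun w => fderiv ℝ f (a' + w) - fderiv ℝ f (a + w))
      (fun w _ => (hρ w).hasFDerivWithinAt)
      (fun w _ => by
        have h := hDh (a' + w) (a + w)
        have e : a' + w - (a + w) = a' - a := by abel
        rwa [e] at h)
      convex_univ (Set.mem_univ (0 : Fin n → ℝ)) (Set.mem_univ z)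
    simpa [Real.norm_eq_abs] using this
  have hb : a + z = b := by rw [hz]; abel
  have hsplit : f b' - f a' - (f b - f a)
      = (f b' - f (a' + z)) + (f (a' + z) - f (a + z) - (f (a' + 0) - f (a + 0))) := by
    rw [hb]; simp; ring
  rw [hsplit]
  have hz0 : ‖z - 0‖ = ‖b - a‖ := by rw [hz]; simp
  calc |_ + _| ≤ |f b' - f (a' + z)| + |f (a' + z) - f (a + z) - (f (a' + 0) - f (a + 0))| :=
        abs_add_le _ _
    _ ≤ M * ‖z' - z‖ + M * ‖a' - a‖ ^ (γ - 1) * ‖z - 0‖ := add_le_add h1 h2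
    _ = M * ‖b' - a' - (b - a)‖ + M * ‖a' - a‖ ^ (γ - 1) * ‖b - a‖ := by
        rw [hz0, hz, hz']

private def eaJ {n d : ℕ} (x : ℕ → Fin d → ℝ) (c : ℕ → Fin n → Fin d → ℝ)
    (w : ℕ → Fin n → ℝ) (k l : ℕ) (i : Fin n) : ℝ :=
  w l i - w k i - ∑ j, c k i j * (x l j - x k j)

private lemma eaJ_split {n d : ℕ} (x : ℕ → Fin d → ℝ) (c : ℕ → Fin n → Fin d → ℝ)
    (w : ℕ → Fin n → ℝ) (k m l : ℕ) (i : Fin n) :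
    eaJ x c w k l i = eaJ x c w k m i + eaJ x c w m l i
      + ∑ j, (c m i j - c k i j) * (x l j - x m j) := by
  simp only [eaJ]
  rw [show (∑ j, c k i j * (x l j - x k j))
      = ∑ j, (c k i j * (x m j - x k j)
        + (c m i j * (x l j - x m j) - (c m i j - c k i j) * (x l j - x m j)))
      from Finset.sum_congr rfl (fun j _ => by ring)]
  rw [Finset.sum_add_distrib, Finset.sum_sub_distrib]
  ring

private lemma eaJ_self {n d : ℕ} (x : ℕ → Fin d → ℝ) (c : ℕ → Fin n → Fin d → ℝ)
    (w : ℕ → Fin n → ℝ) (k : ℕ) (i : Fin n) : eaJ x c w k k i = 0 := by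
  simp [eaJ]

set_option maxHeartbeats 2000000 in
/-- Lemma 1(b) of the paper: Lipschitz dependence of the Euler iterates on the initial
condition, uniformly in the partition, for `1 ≤ p < γ ≤ 2` and `C^γ` coefficients. -/
theorem euler_scheme_lipschitz_dependence (n d : ℕ) (γ p Ω M₀ : ℝ)
    (hp : 1 ≤ p) (hpγ : p < γ) (hγ : γ ≤ 2) (hΩ : 0 ≤ Ω) (hM₀ : 0 < M₀) :
    ∃ M' > 0,
      ∀ (K : ℕ) (x : ℕ → Fin d → ℝ) (ω : ℕ → ℕ → ℝ)
        (f : Fin n → Fin d → (Fin n → ℝ) → ℝ) (y ytilde : ℕ → Fin n → ℝ),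
        (∀ k l, k ≤ l → l ≤ K → 0 ≤ ω k l) →
        (∀ k l m, k ≤ l → l ≤ m → m ≤ K → ω k l + ω l m ≤ ω k m) →
        ω 0 K ≤ Ω →
        (∀ k l, k ≤ l → l ≤ K → ∀ j, |x l j - x k j| ^ p ≤ ω k l) →
        (∀ i j y', |f i j y'| ≤ M₀) →
        (∀ i j y' z', |f i j y' - f i j z'| ≤ M₀ * ‖y' - z'‖ ^ (γ - 1)) →
        (∀ i j, Differentiable ℝ (f i j)) →
        (∀ i j y', ‖fderiv ℝ (f i j) y'‖ ≤ M₀) →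
        (∀ i j y' z', ‖fderiv ℝ (f i j) y' - fderiv ℝ (f i j) z'‖
          ≤ M₀ * ‖y' - z'‖ ^ (γ - 1)) →
        (∀ k i, y (k + 1) i = y k i + ∑ j, f i j (y k) * (x (k + 1) j - x k j)) →
        (∀ k i, ytilde (k + 1) i
          = ytilde k i + ∑ j, f i j (ytilde k) * (x (k + 1) j - x k j)) →
        ∀ k, k ≤ K → ∀ i, |ytilde k i - y k i| ≤ M' * ‖ytilde 0 - y 0‖ := by
  classical
  have hp0 : 0 < p := by linarith
  have hγ1 : 1 < γ := by linarith
  obtain ⟨θ, hθdef⟩ : ∃ t : ℝ, t = γ / p := ⟨_, rfl⟩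
  have hθ1 : 1 < θ := by rw [hθdef]; exact (one_lt_div hp0).2 hpγ
  have hθ0 : (0:ℝ) ≤ θ := by linarith
  have hθ2 : θ ≤ 2 / p := by rw [hθdef]; exact (div_le_div_iff_of_pos_right hp0).2 hγ
  have hgm1 : 0 < γ - 1 := by linarith
  have hgm1' : γ - 1 ≤ 1 := by linarith
  have hip0 : 0 < 1/p := by positivity
  have hipθ : 1/p ≤ θ := by rw [hθdef]; exact (div_le_div_iff_of_pos_right hp0).2 (by linarith)
  obtain ⟨κ, hκdef⟩ : ∃ t : ℝ, t = 1 - (2:ℝ) ^ ((1:ℝ) - θ) := ⟨_, rfl⟩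
  have h2θlt : (2:ℝ) ^ ((1:ℝ) - θ) < 1 :=
    Real.rpow_lt_one_of_one_lt_of_neg one_lt_two (by linarith)
  have h2θpos : (0:ℝ) < (2:ℝ) ^ ((1:ℝ) - θ) := Real.rpow_pos_of_pos two_pos _
  have hκ0 : 0 < κ := by rw [hκdef]; linarith
  have hκ1 : κ < 1 := by rw [hκdef]; linarith
  obtain ⟨B, hBdef⟩ : ∃ t : ℝ, t = d * M₀ := ⟨_, rfl⟩
  have hB0 : 0 ≤ B := by rw [hBdef]; positivity
  obtain ⟨C, hCdef⟩ : ∃ t : ℝ, t = (4*d*M₀*(2*B+1) + 1)/κ + 1 := ⟨_, rfl⟩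
  have hC1 : 1 ≤ C := by
    have h1 : 0 ≤ (4*d*M₀*(2*B+1) + 1)/κ := by positivity
    rw [hCdef]; linarith
  have hC0 : (0:ℝ) < C := by linarith
  obtain ⟨e₁, he₁def⟩ : ∃ t : ℝ, t = (γ-1)^2/p := ⟨_, rfl⟩
  have he₁0 : 0 < e₁ := by rw [he₁def]; positivity
  obtain ⟨q, hqdef⟩ : ∃ t : ℝ, t = κ / (8*d*M₀+8) := ⟨_, rfl⟩
  have hq0 : 0 < q := by rw [hqdef]; positivity
  obtain ⟨L, hLdef⟩ : ∃ t : ℝ, t = min 1 (q ^ (1/e₁)) := ⟨_, rfl⟩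
  have hL0 : 0 < L := by rw [hLdef]; exact lt_min one_pos (Real.rpow_pos_of_pos hq0 _)
  have hL1 : L ≤ 1 := by rw [hLdef]; exact min_le_left _ _
  have hLq : L ^ e₁ ≤ q := by
    calc L ^ e₁ ≤ (q ^ (1/e₁)) ^ e₁ :=
          Real.rpow_le_rpow hL0.le (by rw [hLdef]; exact min_le_right _ _) he₁0.le
      _ = q := by
          rw [← Real.rpow_mul hq0.le, one_div, inv_mul_cancel₀ he₁0.ne', Real.rpow_one]
  obtain ⟨C₁, hC₁def⟩ : ∃ t : ℝ, t = C + B := ⟨_, rfl⟩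
  have hC₁1 : 1 ≤ C₁ := by rw [hC₁def]; linarith
  obtain ⟨D, hDdef⟩ : ∃ t : ℝ, t = (2/κ) * (d*M₀*(3*B+B^2) + 2*d*M₀*(C₁+1)) + 1 := ⟨_, rfl⟩
  have hD1 : 1 ≤ D := by
    have h1 : 0 ≤ (2/κ) * (d*M₀*(3*B+B^2) + 2*d*M₀*(C₁+1)) := by positivity
    rw [hDdef]; linarith
  have hD0 : (0:ℝ) < D := by linarith
  obtain ⟨G, hGdef⟩ : ∃ t : ℝ, t = (1+B)*D + 2*B + B^2 + d*M₀ + d*M₀*(1+B) := ⟨_, rfl⟩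
  have hG0 : 0 < G := by
    have h1 : (0:ℝ) ≤ d*M₀ := by positivity
    have h2 : (0:ℝ) < (1+B)*D := mul_pos (by linarith) hD0
    have h3 : (0:ℝ) ≤ B^2 := sq_nonneg B
    have h4 : (0:ℝ) ≤ d*M₀*(1+B) := mul_nonneg h1 (by linarith)
    rw [hGdef]; linarith
  obtain ⟨L', hL'def⟩ : ∃ t : ℝ, t = min L ((κ/(2*G)) ^ p) := ⟨_, rfl⟩
  have hL'0 : 0 < L' := by rw [hL'def]; exact lt_min hL0 (Real.rpow_pos_of_pos (by positivity) _)
  have hL'L : L' ≤ L := by rw [hL'def]; exact min_le_left _ _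
  have hL'1 : L' ≤ 1 := le_trans hL'L hL1
  have hGL' : G * L' ^ (1/p) ≤ κ/2 := by
    have h1 : L' ^ (1/p) ≤ κ/(2*G) := by
      calc L' ^ (1/p) ≤ ((κ/(2*G)) ^ p) ^ (1/p) :=
            Real.rpow_le_rpow hL'0.le (by rw [hL'def]; exact min_le_right _ _) hip0.le
        _ = κ/(2*G) := by
            rw [← Real.rpow_mul (by positivity), mul_one_div, div_self hp0.ne', Real.rpow_one]
    calc G * L' ^ (1/p) ≤ G * (κ/(2*G)) := mul_le_mul_of_nonneg_left h1 hG0.le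
      _ = κ/2 := by field_simp
  obtain ⟨F, hFdef⟩ : ∃ t : ℝ, t = 1 + D + B + B * Ω ^ (1/p) := ⟨_, rfl⟩
  have hF1 : 1 ≤ F := by
    have h1 : 0 ≤ B * Ω ^ (1/p) := mul_nonneg hB0 (Real.rpow_nonneg hΩ _)
    rw [hFdef]; linarith
  have hF0 : (0:ℝ) < F := by linarith
  obtain ⟨j₀, hj₀def⟩ : ∃ t : ℕ, t = ⌈Ω / L'⌉₊ := ⟨_, rfl⟩
  refine ⟨F ^ (2*j₀+1), pow_pos hF0 _, ?_⟩
  intro K x ω f y yt hωnn hωadd hωΩ hxp hfb hfH hfd hfD hfDH hy hyt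
  -- basic facts about ω
  have hKK : ∀ {k}, k ≤ K → ω k k = 0 := by
    intro k hk
    have h1 := hωadd k k k le_rfl le_rfl hk
    have h2 := hωnn k k le_rfl hk
    linarith
  have hmono : ∀ k k' l l', k ≤ k' → k' ≤ l → l ≤ l' → l' ≤ K → ω k' l ≤ ω k l' := by
    intro k k' l l' h1 h2 h3 h4
    have ha := hωadd k k' l h1 h2 (le_trans h3 h4)
    have hb := hωadd k l l' (le_trans h1 h2) h3 h4
    have hc := hωnn k k' h1 (le_trans h2 (le_trans h3 h4))
    have hd := hωnn l l' h3 h4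
    linarith
  have hxb : ∀ k l, k ≤ l → l ≤ K → ∀ j, |x l j - x k j| ≤ (ω k l) ^ (1/p) := by
    intro k l hkl hlK j
    have h := hxp k l hkl hlK j
    have h0 : (0:ℝ) ≤ |x l j - x k j| := abs_nonneg _
    calc |x l j - x k j| = (|x l j - x k j| ^ p) ^ (1/p) := by
          rw [← Real.rpow_mul h0, mul_one_div, div_self hp0.ne', Real.rpow_one]
      _ ≤ (ω k l) ^ (1/p) :=
          Real.rpow_le_rpow (by positivity) h hip0.le
  obtain ⟨cy, hcy⟩ : ∃ t : ℕ → Fin n → Fin d → ℝ, t = fun k i j => f i j (y k) := ⟨_, rfl⟩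
  obtain ⟨z, hz⟩ : ∃ t : ℕ → Fin n → ℝ, t = fun k => yt k - y k := ⟨_, rfl⟩
  obtain ⟨cz, hcz⟩ : ∃ t : ℕ → Fin n → Fin d → ℝ, t = fun k i j => f i j (yt k) - f i j (y k) := ⟨_, rfl⟩
  have hzapp : ∀ k i, z k i = yt k i - y k i := by intro k i; rw [hz]; rfl
  have hczb : ∀ k i j, |cz k i j| ≤ M₀ * ‖z k‖ := by
    intro k i j
    have := ea_mv_lip (f i j) (hfd i j) (hfD i j) (y k) (yt k)
    rw [hcz]; rw [hz]; exact this
  -- one-step identities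
  have hJystep : ∀ k i, eaJ x cy y k (k+1) i = 0 := by
    intro k i
    simp only [eaJ, hcy]
    rw [hy k i]; ring
  have hzid : ∀ k i, z (k+1) i - z k i = ∑ j, cz k i j * (x (k+1) j - x k j) := by
    intro k i
    have h1 : ∑ j, cz k i j * (x (k+1) j - x k j)
        = ∑ j, (f i j (yt k) * (x (k+1) j - x k j) - f i j (y k) * (x (k+1) j - x k j)) :=
      Finset.sum_congr rfl (fun j _ => by rw [hcz]; ring)
    rw [hzapp, hzapp, h1, Finset.sum_sub_distrib, hy k i, hyt k i]; ring
  have hJzstep : ∀ k i, eaJ x cz z k (k+1) i = 0 := by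
    intro k i
    simp only [eaJ]
    rw [← hzid k i]; ring
  -- one-step bounds
  have hystep : ∀ k, k + 1 ≤ K → ∀ i, |y (k+1) i - y k i| ≤ B * (ω k (k+1)) ^ (1/p) := by
    intro k hk i
    have hid : y (k+1) i - y k i = ∑ j, f i j (y k) * (x (k+1) j - x k j) := by
      rw [hy k i]; ring
    rw [hid]
    have h := ea_abs_sum_mul_le d (fun j => f i j (y k)) (fun j => x (k+1) j - x k j)
      M₀ ((ω k (k+1)) ^ (1/p)) hM₀.le (fun j => hfb i j (y k))
      (fun j => hxb k (k+1) (by omega) hk j)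
    calc |∑ j, f i j (y k) * (x (k+1) j - x k j)| ≤ d * (M₀ * (ω k (k+1)) ^ (1/p)) := h
      _ = B * (ω k (k+1)) ^ (1/p) := by rw [hBdef]; ring
  have hzstep : ∀ k, k + 1 ≤ K → ∀ i, |z (k+1) i - z k i| ≤ B * ‖z k‖ * (ω k (k+1)) ^ (1/p) := by
    intro k hk i
    rw [hzid k i]
    have h := ea_abs_sum_mul_le d (fun j => cz k i j) (fun j => x (k+1) j - x k j)
      (M₀ * ‖z k‖) ((ω k (k+1)) ^ (1/p)) (by positivity) (fun j => hczb k i j)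
      (fun j => hxb k (k+1) (by omega) hk j)
    calc |∑ j, cz k i j * (x (k+1) j - x k j)| ≤ d * (M₀ * ‖z k‖ * (ω k (k+1)) ^ (1/p)) := h
      _ = B * ‖z k‖ * (ω k (k+1)) ^ (1/p) := by rw [hBdef]; ring
  -- Step A : a priori bound on J for y
  have hJy : ∀ r k l, k ≤ l → l ≤ K → l - k = r → ω k l ≤ L →
      ∀ i, |eaJ x cy y k l i| ≤ C * (ω k l) ^ θ := by
    intro r
    induction r using Nat.strong_induction_on with
    | _ r IH =>
    intro k l hkl hlK hr hωL i
    have hkK : k ≤ K := le_trans hkl hlK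
    have hW0 : 0 ≤ ω k l := hωnn k l hkl hlK
    have hWL1 : ω k l ≤ 1 := le_trans hωL hL1
    rcases eq_or_lt_of_le hkl with heq | hkl'
    · have hz0 : eaJ x cy y k l i = 0 := heq ▸ eaJ_self x cy y k i
      rw [hz0, abs_zero]
      exact mul_nonneg hC0.le (Real.rpow_nonneg hW0 _)
    rcases eq_or_lt_of_le (Nat.succ_le_of_lt hkl') with hl1 | hl2
    · have hz0 : eaJ x cy y k l i = 0 := hl1 ▸ hJystep k i
      rw [hz0, abs_zero]
      exact mul_nonneg hC0.le (Real.rpow_nonneg hW0 _)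
    -- main case : k + 1 < l
    have hPk : k ≤ k ∧ ω k k ≤ ω k l / 2 ∧ k < l :=
      ⟨le_rfl, by rw [hKK hkK]; linarith, hkl'⟩
    obtain ⟨hkm, hωkm, hml⟩ :=
      Nat.findGreatest_spec (P := fun m' => k ≤ m' ∧ ω k m' ≤ ω k l / 2 ∧ m' < l) hkl hPk
    have hmll : Nat.findGreatest (fun m' => k ≤ m' ∧ ω k m' ≤ ω k l / 2 ∧ m' < l) l ≤ l :=
      Nat.findGreatest_le l
    set m := Nat.findGreatest (fun m' => k ≤ m' ∧ ω k m' ≤ ω k l / 2 ∧ m' < l) l with hmdef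
    have hmK : m ≤ K := le_trans (le_of_lt hml) hlK
    have hm1l : m + 1 ≤ l := hml
    have hm1K : m + 1 ≤ K := le_trans hm1l hlK
    have hω2 : ω (m+1) l ≤ ω k l / 2 := by
      rcases eq_or_lt_of_le hm1l with he | hlt
      · rw [he, hKK hlK]; linarith
      · have hnP : ¬ (k ≤ m + 1 ∧ ω k (m+1) ≤ ω k l / 2 ∧ m + 1 < l) :=
          Nat.findGreatest_is_greatest
            (P := fun m' => k ≤ m' ∧ ω k m' ≤ ω k l / 2 ∧ m' < l) (by omega) hm1l
        have hgt : ω k l / 2 < ω k (m+1) := by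
          by_contra hle
          exact hnP ⟨by omega, le_of_not_gt hle, hlt⟩
        have hadd := hωadd k (m+1) l (by omega) (le_of_lt hlt) hlK
        linarith
    have hωkm' : ω k m ≤ ω k l := by linarith
    have hω2' : ω (m+1) l ≤ ω k l := by linarith
    have hωm1' : ω m (m+1) ≤ ω k l := hmono k m (m+1) l hkm (Nat.le_succ m) hm1l hlK
    have hωkm1 : ω k (m+1) ≤ ω k l := hmono k k (m+1) l le_rfl (by omega) hm1l hlK
    -- induction hypotheses
    have hJkm : ∀ i', |eaJ x cy y k m i'| ≤ C * (ω k m) ^ θ :=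
      fun i' => IH (m-k) (by omega) k m hkm hmK rfl (by linarith) i'
    have hJm1l : ∀ i', |eaJ x cy y (m+1) l i'| ≤ C * (ω (m+1) l) ^ θ :=
      fun i' => IH (l-(m+1)) (by omega) (m+1) l hm1l hlK rfl (by linarith) i'
    -- rpow basics
    have hWp0 : 0 ≤ (ω k l)^(1/p) := Real.rpow_nonneg hW0 _
    have hWθ0 : 0 ≤ (ω k l)^θ := Real.rpow_nonneg hW0 _
    have hhalf0 : 0 ≤ ω k l / 2 := by linarith
    have hhθ1 : (ω k m)^θ ≤ (ω k l / 2)^θ :=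
      Real.rpow_le_rpow (hωnn k m hkm hmK) hωkm hθ0
    have hhθ2 : (ω (m+1) l)^θ ≤ (ω k l / 2)^θ :=
      Real.rpow_le_rpow (hωnn (m+1) l hm1l hlK) hω2 hθ0
    have h2pθ : (0:ℝ) < (2:ℝ)^θ := Real.rpow_pos_of_pos two_pos θ
    have h2half : 2*((ω k l)/2)^θ = (1-κ)*(ω k l)^θ := by
      rw [Real.div_rpow hW0 (by norm_num : (0:ℝ) ≤ 2), hκdef, Real.rpow_sub two_pos,
        Real.rpow_one]
      field_simp
      ring
    have hhalfle : (ω k l / 2)^θ ≤ (ω k l)^θ :=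
      Real.rpow_le_rpow hhalf0 (by linarith) hθ0
    -- increments of x
    have hxm : ∀ j, |x m j - x k j| ≤ (ω k l)^(1/p) := fun j =>
      le_trans (hxb k m hkm hmK j) (Real.rpow_le_rpow (hωnn k m hkm hmK) hωkm' hip0.le)
    have hxm1 : ∀ j, |x (m+1) j - x m j| ≤ (ω k l)^(1/p) := fun j =>
      le_trans (hxb m (m+1) (Nat.le_succ m) hm1K j)
        (Real.rpow_le_rpow (hωnn m (m+1) (Nat.le_succ m) hm1K) hωm1' hip0.le)
    have hxl : ∀ j, |x l j - x (m+1) j| ≤ (ω k l)^(1/p) := fun j =>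
      le_trans (hxb (m+1) l hm1l hlK j)
        (Real.rpow_le_rpow (hωnn (m+1) l hm1l hlK) hω2' hip0.le)
    -- increments of y
    have hymk : ∀ i', |y m i' - y k i'| ≤ C*(ω k l / 2)^θ + B*(ω k l)^(1/p) := by
      intro i'
      have hid : y m i' - y k i' = eaJ x cy y k m i' + ∑ j, cy k i' j * (x m j - x k j) := by
        simp only [eaJ]; ring
      have hS := ea_abs_sum_mul_le d (fun j => cy k i' j) (fun j => x m j - x k j) M₀
        ((ω k l)^(1/p)) hM₀.le (fun j => by rw [hcy]; exact hfb i' j (y k)) hxm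
      have hBe : (d:ℝ)*(M₀*(ω k l)^(1/p)) = B*(ω k l)^(1/p) := by rw [hBdef]; ring
      have h1 := hJkm i'
      have h2 : C*(ω k m)^θ ≤ C*(ω k l / 2)^θ := mul_le_mul_of_nonneg_left hhθ1 hC0.le
      calc |y m i' - y k i'| ≤ |eaJ x cy y k m i'| + |∑ j, cy k i' j * (x m j - x k j)| := by
            rw [hid]; exact abs_add_le _ _
        _ ≤ C*(ω k l / 2)^θ + B*(ω k l)^(1/p) := by linarith
    have hu20 : 0 ≤ C*(ω k l)^θ + 2*B*(ω k l)^(1/p) := by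
      have h1 := mul_nonneg hC0.le hWθ0
      have h2 := mul_nonneg hB0 hWp0
      linarith
    have hymnorm : ‖y m - y k‖ ≤ C*(ω k l)^θ + 2*B*(ω k l)^(1/p) := by
      rw [pi_norm_le_iff_of_nonneg hu20]
      intro i'; rw [Real.norm_eq_abs, Pi.sub_apply]
      have h1 := hymk i'
      have h2 : C*(ω k l / 2)^θ ≤ C*(ω k l)^θ := mul_le_mul_of_nonneg_left hhalfle hC0.le
      have h3 := mul_nonneg hB0 hWp0
      linarith
    have hym1norm : ‖y (m+1) - y k‖ ≤ C*(ω k l)^θ + 2*B*(ω k l)^(1/p) := by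
      rw [pi_norm_le_iff_of_nonneg hu20]
      intro i'; rw [Real.norm_eq_abs, Pi.sub_apply]
      have h1 := hymk i'
      have h2 : |y (m+1) i' - y m i'| ≤ B*(ω k l)^(1/p) := by
        have h3 := hystep m hm1K i'
        have h4 : (ω m (m+1))^(1/p) ≤ (ω k l)^(1/p) :=
          Real.rpow_le_rpow (hωnn m (m+1) (Nat.le_succ m) hm1K) hωm1' hip0.le
        calc |y (m+1) i' - y m i'| ≤ B*(ω m (m+1))^(1/p) := h3
          _ ≤ B*(ω k l)^(1/p) := mul_le_mul_of_nonneg_left h4 hB0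
      have htri : |y (m+1) i' - y k i'| ≤ |y (m+1) i' - y m i'| + |y m i' - y k i'| := by
        have h5 := abs_add_le (y (m+1) i' - y m i') (y m i' - y k i')
        have h6 : y (m+1) i' - y m i' + (y m i' - y k i') = y (m+1) i' - y k i' := by ring
        rw [h6] at h5; exact h5
      have h7 : C*(ω k l / 2)^θ ≤ C*(ω k l)^θ := mul_le_mul_of_nonneg_left hhalfle hC0.le
      linarith
    -- f differences
    have hfdm : ∀ i' j, |f i' j (y m) - f i' j (y k)|
        ≤ M₀ * (C*(ω k l)^θ + 2*B*(ω k l)^(1/p))^(γ-1) := by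
      intro i' j
      calc |f i' j (y m) - f i' j (y k)| ≤ M₀ * ‖y m - y k‖^(γ-1) := hfH i' j (y m) (y k)
        _ ≤ M₀ * (C*(ω k l)^θ + 2*B*(ω k l)^(1/p))^(γ-1) :=
            mul_le_mul_of_nonneg_left
              (Real.rpow_le_rpow (norm_nonneg _) hymnorm hgm1.le) hM₀.le
    have hfdm1 : ∀ i' j, |f i' j (y (m+1)) - f i' j (y k)|
        ≤ M₀ * (C*(ω k l)^θ + 2*B*(ω k l)^(1/p))^(γ-1) := by
      intro i' j
      calc |f i' j (y (m+1)) - f i' j (y k)| ≤ M₀ * ‖y (m+1) - y k‖^(γ-1) :=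
            hfH i' j (y (m+1)) (y k)
        _ ≤ M₀ * (C*(ω k l)^θ + 2*B*(ω k l)^(1/p))^(γ-1) :=
            mul_le_mul_of_nonneg_left
              (Real.rpow_le_rpow (norm_nonneg _) hym1norm hgm1.le) hM₀.le
    -- cross terms
    have hcr1 : |∑ j, (cy m i j - cy k i j) * (x (m+1) j - x m j)|
        ≤ d * ((M₀ * (C*(ω k l)^θ + 2*B*(ω k l)^(1/p))^(γ-1)) * (ω k l)^(1/p)) :=
      ea_abs_sum_mul_le d _ _ _ _
        (mul_nonneg hM₀.le (Real.rpow_nonneg hu20 _))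
        (fun j => by rw [hcy]; exact hfdm i j) hxm1
    have hcr2 : |∑ j, (cy (m+1) i j - cy k i j) * (x l j - x (m+1) j)|
        ≤ d * ((M₀ * (C*(ω k l)^θ + 2*B*(ω k l)^(1/p))^(γ-1)) * (ω k l)^(1/p)) :=
      ea_abs_sum_mul_le d _ _ _ _
        (mul_nonneg hM₀.le (Real.rpow_nonneg hu20 _))
        (fun j => by rw [hcy]; exact hfdm1 i j) hxl
    -- the key numeric estimate
    have hkey : 2 * ((d:ℝ) * ((M₀ * (C*(ω k l)^θ + 2*B*(ω k l)^(1/p))^(γ-1)) * (ω k l)^(1/p)))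
        ≤ κ * (C * (ω k l)^θ) := by
      have hCθnn : 0 ≤ C*(ω k l)^θ := mul_nonneg hC0.le hWθ0
      have hBpnn : 0 ≤ 2*B*(ω k l)^(1/p) := by
        have := mul_nonneg hB0 hWp0; linarith
      have hsub : (C*(ω k l)^θ + 2*B*(ω k l)^(1/p))^(γ-1)
          ≤ (C*(ω k l)^θ)^(γ-1) + (2*B*(ω k l)^(1/p))^(γ-1) :=
        ea_rpow_add_le _ _ _ hCθnn hBpnn hgm1.le hgm1'
      have he1 : (C*(ω k l)^θ)^(γ-1) = C^(γ-1) * (ω k l)^(θ*(γ-1)) := by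
        rw [Real.mul_rpow hC0.le hWθ0, ← Real.rpow_mul hW0]
      have he2 : (2*B*(ω k l)^(1/p))^(γ-1) = (2*B)^(γ-1) * (ω k l)^((1/p)*(γ-1)) := by
        rw [Real.mul_rpow (by linarith) hWp0, ← Real.rpow_mul hW0]
      have hθγ0 : 0 ≤ θ*(γ-1) := mul_nonneg hθ0 hgm1.le
      have hne1 : θ*(γ-1) + 1/p ≠ 0 := ne_of_gt (by linarith)
      have hne2 : e₁ + θ ≠ 0 := ne_of_gt (by linarith)
      have hexp : θ*(γ-1) + 1/p = e₁ + θ := by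
        rw [hθdef, he₁def]; field_simp; ring
      have he3 : (ω k l)^(θ*(γ-1)) * (ω k l)^(1/p) = (ω k l)^e₁ * (ω k l)^θ := by
        rw [← Real.rpow_add' hW0 hne1, hexp, Real.rpow_add' hW0 hne2]
      have hip2 : (0:ℝ) ≤ (1/p)*(γ-1) := mul_nonneg hip0.le hgm1.le
      have hne3 : (1/p)*(γ-1) + 1/p ≠ 0 := ne_of_gt (by linarith)
      have hexp2 : (1/p)*(γ-1) + 1/p = θ := by rw [hθdef]; field_simp; ring
      have he4 : (ω k l)^((1/p)*(γ-1)) * (ω k l)^(1/p) = (ω k l)^θ := by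
        rw [← Real.rpow_add' hW0 hne3, hexp2]
      have hqW : (ω k l)^e₁ ≤ q :=
        le_trans (Real.rpow_le_rpow hW0 hωL he₁0.le) hLq
      have hCb : C^(γ-1) ≤ 2*C :=
        le_trans (ea_rpow_le_add_one C (γ-1) hC0.le hgm1.le hgm1') (by linarith)
      have hBb : (2*B)^(γ-1) ≤ 2*B+1 :=
        ea_rpow_le_add_one _ _ (by linarith) hgm1.le hgm1'
      have hCe0 : 0 ≤ C^(γ-1) := Real.rpow_nonneg hC0.le _
      have hBe0 : 0 ≤ (2*B)^(γ-1) := Real.rpow_nonneg (by linarith) _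
      have hWe0 : 0 ≤ (ω k l)^e₁ := Real.rpow_nonneg hW0 _
      have hWθγ0 : 0 ≤ (ω k l)^(θ*(γ-1)) := Real.rpow_nonneg hW0 _
      have hWip0 : 0 ≤ (ω k l)^((1/p)*(γ-1)) := Real.rpow_nonneg hW0 _
      have hdm : (0:ℝ) ≤ (d:ℝ)*M₀ := mul_nonneg (Nat.cast_nonneg d) hM₀.le
      -- main chain
      have hmain : (C*(ω k l)^θ + 2*B*(ω k l)^(1/p))^(γ-1) * (ω k l)^(1/p)
          ≤ 2*C*q*(ω k l)^θ + (2*B+1)*(ω k l)^θ := by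
        have t1 : (C*(ω k l)^θ + 2*B*(ω k l)^(1/p))^(γ-1) * (ω k l)^(1/p)
            ≤ (C^(γ-1) * (ω k l)^(θ*(γ-1)) + (2*B)^(γ-1) * (ω k l)^((1/p)*(γ-1)))
              * (ω k l)^(1/p) := by
          apply mul_le_mul_of_nonneg_right _ hWp0
          rw [← he1, ← he2]; exact hsub
        have t2 : (C^(γ-1) * (ω k l)^(θ*(γ-1)) + (2*B)^(γ-1) * (ω k l)^((1/p)*(γ-1)))
              * (ω k l)^(1/p)
            = C^(γ-1) * ((ω k l)^e₁ * (ω k l)^θ) + (2*B)^(γ-1) * (ω k l)^θ := by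
          rw [← he3, ← he4]; ring
        have t3 : C^(γ-1) * ((ω k l)^e₁ * (ω k l)^θ) ≤ 2*C*q*(ω k l)^θ := by
          have s1 : C^(γ-1) * ((ω k l)^e₁ * (ω k l)^θ) ≤ 2*C * ((ω k l)^e₁ * (ω k l)^θ) :=
            mul_le_mul_of_nonneg_right hCb (mul_nonneg hWe0 hWθ0)
          have s2 : 2*C * ((ω k l)^e₁ * (ω k l)^θ) ≤ 2*C * (q * (ω k l)^θ) := by
            apply mul_le_mul_of_nonneg_left _ (by linarith)
            exact mul_le_mul_of_nonneg_right hqW hWθ0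
          calc C^(γ-1) * ((ω k l)^e₁ * (ω k l)^θ) ≤ 2*C * (q * (ω k l)^θ) :=
                le_trans s1 s2
            _ = 2*C*q*(ω k l)^θ := by ring
        have t4 : (2*B)^(γ-1) * (ω k l)^θ ≤ (2*B+1)*(ω k l)^θ :=
          mul_le_mul_of_nonneg_right hBb hWθ0
        calc (C*(ω k l)^θ + 2*B*(ω k l)^(1/p))^(γ-1) * (ω k l)^(1/p)
            ≤ (C^(γ-1) * (ω k l)^(θ*(γ-1)) + (2*B)^(γ-1) * (ω k l)^((1/p)*(γ-1)))
              * (ω k l)^(1/p) := t1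
          _ = C^(γ-1) * ((ω k l)^e₁ * (ω k l)^θ) + (2*B)^(γ-1) * (ω k l)^θ := t2
          _ ≤ 2*C*q*(ω k l)^θ + (2*B+1)*(ω k l)^θ := add_le_add t3 t4
      -- multiply by 2 d M₀ and use constants
      have hq4 : 4*((d:ℝ)*M₀)*q ≤ κ/2 := by
        have hd8 : (0:ℝ) < 8*((d:ℝ)*M₀)+8 := by linarith
        have hqe : q = κ/(8*((d:ℝ)*M₀)+8) := by rw [hqdef]; ring_nf
        rw [hqe]
        rw [show 4*((d:ℝ)*M₀)*(κ/(8*((d:ℝ)*M₀)+8)) = (4*((d:ℝ)*M₀)*κ)/(8*((d:ℝ)*M₀)+8)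
          from by ring]
        rw [div_le_div_iff₀ hd8 two_pos]
        have hx := mul_nonneg hdm hκ0.le
        linarith [hx, hκ0.le]
      have hκC : κ*C = 4*(d:ℝ)*M₀*(2*B+1) + 1 + κ := by
        rw [hCdef]; field_simp
      have hfin : 2*((d:ℝ)*M₀) * (2*C*q*(ω k l)^θ + (2*B+1)*(ω k l)^θ)
          ≤ κ * (C * (ω k l)^θ) := by
        have w1 : 2*((d:ℝ)*M₀) * (2*C*q*(ω k l)^θ)
            = (4*((d:ℝ)*M₀)*q) * (C * (ω k l)^θ) := by ring
        have w2 : (4*((d:ℝ)*M₀)*q) * (C * (ω k l)^θ) ≤ (κ/2) * (C * (ω k l)^θ) :=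
          mul_le_mul_of_nonneg_right hq4 (mul_nonneg hC0.le hWθ0)
        have w3 : 2*((d:ℝ)*M₀) * ((2*B+1)*(ω k l)^θ) ≤ (κ/2) * (C * (ω k l)^θ) := by
          have u1 : 2*((d:ℝ)*M₀)*(2*B+1) ≤ (κ/2) * C := by
            have hx : (0:ℝ) ≤ κ := hκ0.le
            linarith [hκC]
          have u2 : 2*((d:ℝ)*M₀) * ((2*B+1)*(ω k l)^θ)
              = (2*((d:ℝ)*M₀)*(2*B+1)) * (ω k l)^θ := by ring
          have u3 : (2*((d:ℝ)*M₀)*(2*B+1)) * (ω k l)^θ ≤ ((κ/2) * C) * (ω k l)^θ :=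
            mul_le_mul_of_nonneg_right u1 hWθ0
          rw [u2]; calc (2*((d:ℝ)*M₀)*(2*B+1)) * (ω k l)^θ ≤ ((κ/2) * C) * (ω k l)^θ := u3
            _ = (κ/2) * (C * (ω k l)^θ) := by ring
        linarith [w1, w2, w3]
      have hms : 2 * ((d:ℝ) * ((M₀ * (C*(ω k l)^θ + 2*B*(ω k l)^(1/p))^(γ-1)) * (ω k l)^(1/p)))
          = 2*((d:ℝ)*M₀) * ((C*(ω k l)^θ + 2*B*(ω k l)^(1/p))^(γ-1) * (ω k l)^(1/p)) := by
        ring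
      rw [hms]
      calc 2*((d:ℝ)*M₀) * ((C*(ω k l)^θ + 2*B*(ω k l)^(1/p))^(γ-1) * (ω k l)^(1/p))
          ≤ 2*((d:ℝ)*M₀) * (2*C*q*(ω k l)^θ + (2*B+1)*(ω k l)^θ) :=
            mul_le_mul_of_nonneg_left hmain (by linarith)
        _ ≤ κ * (C * (ω k l)^θ) := hfin
    -- final assembly
    have hsplit2 : eaJ x cy y k l i
        = eaJ x cy y k m i + eaJ x cy y m (m+1) i + eaJ x cy y (m+1) l i
          + (∑ j, (cy m i j - cy k i j)*(x (m+1) j - x m j))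
          + (∑ j, (cy (m+1) i j - cy k i j)*(x l j - x (m+1) j)) := by
      rw [eaJ_split x cy y k (m+1) l i, eaJ_split x cy y k m (m+1) i]; ring
    rw [hsplit2, hJystep m i]
    have hJ1 := hJkm i
    have hJ2 := hJm1l i
    have hc1 : |eaJ x cy y k m i| ≤ C*(ω k l / 2)^θ :=
      le_trans hJ1 (mul_le_mul_of_nonneg_left hhθ1 hC0.le)
    have hc2 : |eaJ x cy y (m+1) l i| ≤ C*(ω k l / 2)^θ :=
      le_trans hJ2 (mul_le_mul_of_nonneg_left hhθ2 hC0.le)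
    have habs : |eaJ x cy y k m i + 0 + eaJ x cy y (m+1) l i
          + (∑ j, (cy m i j - cy k i j)*(x (m+1) j - x m j))
          + (∑ j, (cy (m+1) i j - cy k i j)*(x l j - x (m+1) j))|
        ≤ |eaJ x cy y k m i| + |eaJ x cy y (m+1) l i|
          + |∑ j, (cy m i j - cy k i j)*(x (m+1) j - x m j)|
          + |∑ j, (cy (m+1) i j - cy k i j)*(x l j - x (m+1) j)| := by
      have a1 := abs_add_le (eaJ x cy y k m i + 0 + eaJ x cy y (m+1) l i
          + (∑ j, (cy m i j - cy k i j)*(x (m+1) j - x m j)))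
        (∑ j, (cy (m+1) i j - cy k i j)*(x l j - x (m+1) j))
      have a2 := abs_add_le (eaJ x cy y k m i + 0 + eaJ x cy y (m+1) l i)
        (∑ j, (cy m i j - cy k i j)*(x (m+1) j - x m j))
      have a3 := abs_add_le (eaJ x cy y k m i + 0) (eaJ x cy y (m+1) l i)
      have a4 : |eaJ x cy y k m i + 0| = |eaJ x cy y k m i| := by rw [add_zero]
      linarith
    calc |eaJ x cy y k m i + 0 + eaJ x cy y (m+1) l i
          + (∑ j, (cy m i j - cy k i j)*(x (m+1) j - x m j))
          + (∑ j, (cy (m+1) i j - cy k i j)*(x l j - x (m+1) j))|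
        ≤ |eaJ x cy y k m i| + |eaJ x cy y (m+1) l i|
          + |∑ j, (cy m i j - cy k i j)*(x (m+1) j - x m j)|
          + |∑ j, (cy (m+1) i j - cy k i j)*(x l j - x (m+1) j)| := habs
      _ ≤ C * (ω k l)^θ := by
          have h2halfC : 2*(C*(ω k l / 2)^θ) = C*((1-κ)*(ω k l)^θ) := by
            rw [show 2*(C*(ω k l / 2)^θ) = C*(2*(ω k l/2)^θ) from by ring, h2half]
          have hfin2 : C*((1-κ)*(ω k l)^θ) + κ*(C*(ω k l)^θ) = C*(ω k l)^θ := by ring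
          linarith [hcr1, hcr2, hkey, h2halfC, hfin2]
  -- increment bound for y on small intervals
  have hyinc : ∀ k l, k ≤ l → l ≤ K → ω k l ≤ L → ‖y l - y k‖ ≤ C₁ * (ω k l) ^ (1/p) := by
    intro k l hkl hlK hωL
    have hW0 : 0 ≤ ω k l := hωnn k l hkl hlK
    have hW1 : ω k l ≤ 1 := le_trans hωL hL1
    have hθp : (ω k l)^θ ≤ (ω k l)^(1/p) := ea_rpow_exp_ge _ _ _ hW0 hW1 hip0 hipθ
    have hp0' : 0 ≤ (ω k l)^(1/p) := Real.rpow_nonneg hW0 _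
    have hrhs : 0 ≤ C₁ * (ω k l)^(1/p) := mul_nonneg (by linarith) hp0'
    rw [pi_norm_le_iff_of_nonneg hrhs]
    intro i
    rw [Real.norm_eq_abs, Pi.sub_apply]
    have hJ := hJy (l-k) k l hkl hlK rfl hωL i
    have hS := ea_abs_sum_mul_le d (fun j => cy k i j) (fun j => x l j - x k j) M₀
      ((ω k l)^(1/p)) hM₀.le (fun j => by rw [hcy]; exact hfb i j (y k))
      (fun j => hxb k l hkl hlK j)
    have hid : y l i - y k i = eaJ x cy y k l i + ∑ j, cy k i j * (x l j - x k j) := by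
      simp only [eaJ]; ring
    have hBe : (d:ℝ) * (M₀ * (ω k l)^(1/p)) = B * (ω k l)^(1/p) := by rw [hBdef]; ring
    have hCθ : C * (ω k l)^θ ≤ C * (ω k l)^(1/p) := mul_le_mul_of_nonneg_left hθp hC0.le
    calc |y l i - y k i| ≤ |eaJ x cy y k l i| + |∑ j, cy k i j * (x l j - x k j)| := by
          rw [hid]; exact abs_add_le _ _
      _ ≤ C₁ * (ω k l)^(1/p) := by rw [hC₁def]; linarith
  -- Step B : bound on J for z
  have hJz : ∀ r k l, k ≤ l → l ≤ K → l - k = r → ω k l ≤ L' →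
      ∀ i, |eaJ x cz z k l i| ≤ D * ‖z k‖ * (ω k l) ^ θ := by
    intro r
    induction r using Nat.strong_induction_on with
    | _ r IH =>
    intro k l hkl hlK hr hωL' i
    have hkK : k ≤ K := le_trans hkl hlK
    have hW0 : 0 ≤ ω k l := hωnn k l hkl hlK
    have hWL1 : ω k l ≤ 1 := le_trans hωL' hL'1
    have hN0 : (0:ℝ) ≤ ‖z k‖ := norm_nonneg _
    rcases eq_or_lt_of_le hkl with heq | hkl'
    · have hz0 : eaJ x cz z k l i = 0 := heq ▸ eaJ_self x cz z k i
      rw [hz0, abs_zero]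
      exact mul_nonneg (mul_nonneg hD0.le hN0) (Real.rpow_nonneg hW0 _)
    rcases eq_or_lt_of_le (Nat.succ_le_of_lt hkl') with hl1 | hl2
    · have hz0 : eaJ x cz z k l i = 0 := hl1 ▸ hJzstep k i
      rw [hz0, abs_zero]
      exact mul_nonneg (mul_nonneg hD0.le hN0) (Real.rpow_nonneg hW0 _)
    -- main case : k + 1 < l
    have hPk : k ≤ k ∧ ω k k ≤ ω k l / 2 ∧ k < l :=
      ⟨le_rfl, by rw [hKK hkK]; linarith, hkl'⟩
    obtain ⟨hkm, hωkm, hml⟩ :=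
      Nat.findGreatest_spec (P := fun m' => k ≤ m' ∧ ω k m' ≤ ω k l / 2 ∧ m' < l) hkl hPk
    have hmll : Nat.findGreatest (fun m' => k ≤ m' ∧ ω k m' ≤ ω k l / 2 ∧ m' < l) l ≤ l :=
      Nat.findGreatest_le l
    set m := Nat.findGreatest (fun m' => k ≤ m' ∧ ω k m' ≤ ω k l / 2 ∧ m' < l) l with hmdef
    have hmK : m ≤ K := le_trans (le_of_lt hml) hlK
    have hm1l : m + 1 ≤ l := hml
    have hm1K : m + 1 ≤ K := le_trans hm1l hlK
    have hω2 : ω (m+1) l ≤ ω k l / 2 := by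
      rcases eq_or_lt_of_le hm1l with he | hlt
      · rw [he, hKK hlK]; linarith
      · have hnP : ¬ (k ≤ m + 1 ∧ ω k (m+1) ≤ ω k l / 2 ∧ m + 1 < l) :=
          Nat.findGreatest_is_greatest
            (P := fun m' => k ≤ m' ∧ ω k m' ≤ ω k l / 2 ∧ m' < l) (by omega) hm1l
        have hgt : ω k l / 2 < ω k (m+1) := by
          by_contra hle
          exact hnP ⟨by omega, le_of_not_gt hle, hlt⟩
        have hadd := hωadd k (m+1) l (by omega) (le_of_lt hlt) hlK
        linarith
    have hωkm' : ω k m ≤ ω k l := by linarith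
    have hω2' : ω (m+1) l ≤ ω k l := by linarith
    have hωm1' : ω m (m+1) ≤ ω k l := hmono k m (m+1) l hkm (Nat.le_succ m) hm1l hlK
    have hωkm1 : ω k (m+1) ≤ ω k l := hmono k k (m+1) l le_rfl (by omega) hm1l hlK
    -- induction hypotheses
    have hJkm : ∀ i', |eaJ x cz z k m i'| ≤ D * ‖z k‖ * (ω k m) ^ θ :=
      fun i' => IH (m-k) (by omega) k m hkm hmK rfl (by linarith) i'
    have hJm1l : ∀ i', |eaJ x cz z (m+1) l i'| ≤ D * ‖z (m+1)‖ * (ω (m+1) l) ^ θ :=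
      fun i' => IH (l-(m+1)) (by omega) (m+1) l hm1l hlK rfl (by linarith) i'
    -- rpow basics
    have hWp0 : 0 ≤ (ω k l)^(1/p) := Real.rpow_nonneg hW0 _
    have hWθ0 : 0 ≤ (ω k l)^θ := Real.rpow_nonneg hW0 _
    have hWp1 : (ω k l)^(1/p) ≤ 1 := Real.rpow_le_one hW0 hWL1 hip0.le
    have hWθp : (ω k l)^θ ≤ (ω k l)^(1/p) := ea_rpow_exp_ge _ _ _ hW0 hWL1 hip0 hipθ
    have hWpL' : (ω k l)^(1/p) ≤ L'^(1/p) := Real.rpow_le_rpow hW0 hωL' hip0.le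
    have hhalf0 : 0 ≤ ω k l / 2 := by linarith
    have hhθ1 : (ω k m)^θ ≤ (ω k l / 2)^θ :=
      Real.rpow_le_rpow (hωnn k m hkm hmK) hωkm hθ0
    have hhθ2 : (ω (m+1) l)^θ ≤ (ω k l / 2)^θ :=
      Real.rpow_le_rpow (hωnn (m+1) l hm1l hlK) hω2 hθ0
    have h2half : 2*((ω k l)/2)^θ = (1-κ)*(ω k l)^θ := by
      rw [Real.div_rpow hW0 (by norm_num : (0:ℝ) ≤ 2), hκdef, Real.rpow_sub two_pos,
        Real.rpow_one]
      field_simp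
      ring
    have hhalfle : (ω k l / 2)^θ ≤ (ω k l)^θ :=
      Real.rpow_le_rpow hhalf0 (by linarith) hθ0
    have hWpp : (ω k l)^(1/p) * (ω k l)^(1/p) ≤ (ω k l)^θ := by
      have hne : 1/p + 1/p ≠ 0 := ne_of_gt (by linarith)
      have h1 : (ω k l)^(1/p) * (ω k l)^(1/p) = (ω k l)^(1/p + 1/p) :=
        (Real.rpow_add' hW0 hne).symm
      have h2 : (ω k l)^(1/p + 1/p) ≤ (ω k l)^θ := by
        apply ea_rpow_exp_ge _ _ _ hW0 hWL1 (by linarith)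
        have : 1/p + 1/p = 2/p := by ring
        rw [this]; exact hθ2
      linarith [h1 ▸ h2]
    -- increments of x
    have hxm1 : ∀ j, |x (m+1) j - x m j| ≤ (ω k l)^(1/p) := fun j =>
      le_trans (hxb m (m+1) (Nat.le_succ m) hm1K j)
        (Real.rpow_le_rpow (hωnn m (m+1) (Nat.le_succ m) hm1K) hωm1' hip0.le)
    have hxl : ∀ j, |x l j - x (m+1) j| ≤ (ω k l)^(1/p) := fun j =>
      le_trans (hxb (m+1) l hm1l hlK j)
        (Real.rpow_le_rpow (hωnn (m+1) l hm1l hlK) hω2' hip0.le)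
    have hxm : ∀ j, |x m j - x k j| ≤ (ω k l)^(1/p) := fun j =>
      le_trans (hxb k m hkm hmK j)
        (Real.rpow_le_rpow (hωnn k m hkm hmK) hωkm' hip0.le)
    -- increments of z
    have hzmk : ∀ i', |z m i' - z k i'|
        ≤ D*‖z k‖*(ω k l / 2)^θ + B*‖z k‖*(ω k l)^(1/p) := by
      intro i'
      have hid : z m i' - z k i' = eaJ x cz z k m i' + ∑ j, cz k i' j * (x m j - x k j) := by
        simp only [eaJ]; ring
      have hS := ea_abs_sum_mul_le d (fun j => cz k i' j) (fun j => x m j - x k j)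
        (M₀*‖z k‖) ((ω k l)^(1/p)) (mul_nonneg hM₀.le hN0) (fun j => hczb k i' j) hxm
      have hBe : (d:ℝ)*(M₀*‖z k‖*(ω k l)^(1/p)) = B*‖z k‖*(ω k l)^(1/p) := by
        rw [hBdef]; ring
      have h1 := hJkm i'
      have h2 : D*‖z k‖*(ω k m)^θ ≤ D*‖z k‖*(ω k l / 2)^θ :=
        mul_le_mul_of_nonneg_left hhθ1 (mul_nonneg hD0.le hN0)
      have h3 : (d:ℝ) * (M₀*‖z k‖ * (ω k l)^(1/p)) = B*‖z k‖*(ω k l)^(1/p) := by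
        rw [hBdef]; ring
      calc |z m i' - z k i'| ≤ |eaJ x cz z k m i'| + |∑ j, cz k i' j * (x m j - x k j)| := by
            rw [hid]; exact abs_add_le _ _
        _ ≤ D*‖z k‖*(ω k l / 2)^θ + B*‖z k‖*(ω k l)^(1/p) := by linarith
    have hvm0 : 0 ≤ (D*(ω k l)^θ + B*(ω k l)^(1/p)) * ‖z k‖ := by
      have h1 := mul_nonneg hD0.le hWθ0
      have h2 := mul_nonneg hB0 hWp0
      exact mul_nonneg (by linarith) hN0
    have hzmnorm : ‖z m - z k‖ ≤ (D*(ω k l)^θ + B*(ω k l)^(1/p)) * ‖z k‖ := by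
      rw [pi_norm_le_iff_of_nonneg hvm0]
      intro i'; rw [Real.norm_eq_abs, Pi.sub_apply]
      have h1 := hzmk i'
      have h2 : D*‖z k‖*(ω k l / 2)^θ ≤ D*‖z k‖*(ω k l)^θ :=
        mul_le_mul_of_nonneg_left hhalfle (mul_nonneg hD0.le hN0)
      have he : (D*(ω k l)^θ + B*(ω k l)^(1/p)) * ‖z k‖
          = D*‖z k‖*(ω k l)^θ + B*‖z k‖*(ω k l)^(1/p) := by ring
      rw [he]; linarith
    have hzmN : ‖z m‖ ≤ ‖z k‖ + (D*(ω k l)^θ + B*(ω k l)^(1/p)) * ‖z k‖ := by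
      have h1 := norm_sub_norm_le (z m) (z k)
      linarith [hzmnorm]
    have hvm10 : 0 ≤ ((1+B)*D*(ω k l)^θ + (2*B+B^2)*(ω k l)^(1/p)) * ‖z k‖ := by
      have h1 : 0 ≤ (1+B)*D := mul_nonneg (by linarith) hD0.le
      have h2 : 0 ≤ 2*B+B^2 := by positivity
      have h3 := mul_nonneg h1 hWθ0
      have h4 := mul_nonneg h2 hWp0
      exact mul_nonneg (by linarith) hN0
    have hzm1k : ‖z (m+1) - z k‖
        ≤ ((1+B)*D*(ω k l)^θ + (2*B+B^2)*(ω k l)^(1/p)) * ‖z k‖ := by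
      rw [pi_norm_le_iff_of_nonneg hvm10]
      intro i'; rw [Real.norm_eq_abs, Pi.sub_apply]
      have h1 := hzmk i'
      have h2 : |z (m+1) i' - z m i'| ≤ B*‖z m‖*(ω k l)^(1/p) := by
        have h3 := hzstep m hm1K i'
        have h4 : (ω m (m+1))^(1/p) ≤ (ω k l)^(1/p) :=
          Real.rpow_le_rpow (hωnn m (m+1) (Nat.le_succ m) hm1K) hωm1' hip0.le
        calc |z (m+1) i' - z m i'| ≤ B*‖z m‖*(ω m (m+1))^(1/p) := h3
          _ ≤ B*‖z m‖*(ω k l)^(1/p) :=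
              mul_le_mul_of_nonneg_left h4 (mul_nonneg hB0 (norm_nonneg _))
      have h5 : B*‖z m‖*(ω k l)^(1/p)
          ≤ B*(‖z k‖ + (D*(ω k l)^θ + B*(ω k l)^(1/p)) * ‖z k‖)*(ω k l)^(1/p) := by
        apply mul_le_mul_of_nonneg_right _ hWp0
        exact mul_le_mul_of_nonneg_left hzmN hB0
      -- expand and absorb
      have h6 : B*(‖z k‖ + (D*(ω k l)^θ + B*(ω k l)^(1/p)) * ‖z k‖)*(ω k l)^(1/p)
          = B*‖z k‖*(ω k l)^(1/p) + B*D*‖z k‖*((ω k l)^θ*(ω k l)^(1/p))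
            + B^2*‖z k‖*((ω k l)^(1/p)*(ω k l)^(1/p)) := by ring
      have h7 : (ω k l)^θ*(ω k l)^(1/p) ≤ (ω k l)^θ := by
        calc (ω k l)^θ*(ω k l)^(1/p) ≤ (ω k l)^θ*1 :=
              mul_le_mul_of_nonneg_left hWp1 hWθ0
          _ = (ω k l)^θ := by ring
      have h8 : (ω k l)^(1/p)*(ω k l)^(1/p) ≤ (ω k l)^(1/p) := by
        calc (ω k l)^(1/p)*(ω k l)^(1/p) ≤ (ω k l)^(1/p)*1 :=
              mul_le_mul_of_nonneg_left hWp1 hWp0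
          _ = (ω k l)^(1/p) := by ring
      have h9 : B*D*‖z k‖*((ω k l)^θ*(ω k l)^(1/p)) ≤ B*D*‖z k‖*(ω k l)^θ :=
        mul_le_mul_of_nonneg_left h7 (mul_nonneg (mul_nonneg hB0 hD0.le) hN0)
      have h10 : B^2*‖z k‖*((ω k l)^(1/p)*(ω k l)^(1/p)) ≤ B^2*‖z k‖*(ω k l)^(1/p) :=
        mul_le_mul_of_nonneg_left h8 (mul_nonneg (by positivity) hN0)
      have h11 : D*‖z k‖*(ω k l / 2)^θ ≤ D*‖z k‖*(ω k l)^θ :=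
        mul_le_mul_of_nonneg_left hhalfle (mul_nonneg hD0.le hN0)
      have htri : |z (m+1) i' - z k i'| ≤ |z (m+1) i' - z m i'| + |z m i' - z k i'| := by
        have ha := abs_add_le (z (m+1) i' - z m i') (z m i' - z k i')
        have hb : z (m+1) i' - z m i' + (z m i' - z k i') = z (m+1) i' - z k i' := by ring
        rw [hb] at ha; exact ha
      have hgoal : ((1+B)*D*(ω k l)^θ + (2*B+B^2)*(ω k l)^(1/p)) * ‖z k‖
          = D*‖z k‖*(ω k l)^θ + B*D*‖z k‖*(ω k l)^θ + 2*B*‖z k‖*(ω k l)^(1/p)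
            + B^2*‖z k‖*(ω k l)^(1/p) := by ring
      rw [hgoal]; linarith
    have hzm1N : ‖z (m+1)‖
        ≤ ‖z k‖ + ((1+B)*D*(ω k l)^θ + (2*B+B^2)*(ω k l)^(1/p)) * ‖z k‖ := by
      have h1 := norm_sub_norm_le (z (m+1)) (z k)
      linarith [hzm1k]
    -- cz differences
    have hczd : ∀ m', k ≤ m' → m' ≤ K → ω k m' ≤ ω k l → ∀ i' j,
        |cz m' i' j - cz k i' j|
        ≤ M₀*‖z m' - z k‖ + M₀*(C₁*(ω k l)^(1/p))^(γ-1)*‖z k‖ := by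
      intro m' hkm' hm'K hωm' i' j
      have hec := ea_hdiff (f i' j) (hfd i' j) (hfD i' j) (hfDH i' j)
        (y k) (y m') (yt k) (yt m')
      have he1 : yt m' - y m' - (yt k - y k) = z m' - z k := by rw [hz]
      have he2 : yt k - y k = z k := by rw [hz]
      rw [he1, he2] at hec
      have hy1 : ‖y m' - y k‖ ≤ C₁*(ω k l)^(1/p) := by
        have h1 := hyinc k m' hkm' hm'K (by linarith [le_trans hωL' hL'L])
        calc ‖y m' - y k‖ ≤ C₁*(ω k m')^(1/p) := h1
          _ ≤ C₁*(ω k l)^(1/p) := by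
              apply mul_le_mul_of_nonneg_left _ (by linarith : (0:ℝ) ≤ C₁)
              exact Real.rpow_le_rpow (hωnn k m' hkm' hm'K) hωm' hip0.le
      have hy2 : ‖y m' - y k‖^(γ-1) ≤ (C₁*(ω k l)^(1/p))^(γ-1) :=
        Real.rpow_le_rpow (norm_nonneg _) hy1 hgm1.le
      have hy3 : M₀*‖y m' - y k‖^(γ-1)*‖z k‖ ≤ M₀*(C₁*(ω k l)^(1/p))^(γ-1)*‖z k‖ := by
        apply mul_le_mul_of_nonneg_right _ hN0
        exact mul_le_mul_of_nonneg_left hy2 hM₀.le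
      have hid : cz m' i' j - cz k i' j
          = f i' j (yt m') - f i' j (y m') - (f i' j (yt k) - f i' j (y k)) := by
        rw [hcz]
      rw [hid]
      linarith
    have hczdm : ∀ i' j, |cz m i' j - cz k i' j|
        ≤ M₀*((D*(ω k l)^θ + B*(ω k l)^(1/p))*‖z k‖)
          + M₀*(C₁*(ω k l)^(1/p))^(γ-1)*‖z k‖ := by
      intro i' j
      have h1 := hczd m hkm hmK hωkm' i' j
      have h2 : M₀*‖z m - z k‖ ≤ M₀*((D*(ω k l)^θ + B*(ω k l)^(1/p))*‖z k‖) :=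
        mul_le_mul_of_nonneg_left hzmnorm hM₀.le
      linarith
    have hczdm1 : ∀ i' j, |cz (m+1) i' j - cz k i' j|
        ≤ M₀*(((1+B)*D*(ω k l)^θ + (2*B+B^2)*(ω k l)^(1/p))*‖z k‖)
          + M₀*(C₁*(ω k l)^(1/p))^(γ-1)*‖z k‖ := by
      intro i' j
      have h1 := hczd (m+1) (by omega) hm1K hωkm1 i' j
      have h2 : M₀*‖z (m+1) - z k‖
          ≤ M₀*(((1+B)*D*(ω k l)^θ + (2*B+B^2)*(ω k l)^(1/p))*‖z k‖) :=
        mul_le_mul_of_nonneg_left hzm1k hM₀.le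
      linarith
    -- cross terms
    have hcg0 : 0 ≤ (C₁*(ω k l)^(1/p))^(γ-1) :=
      Real.rpow_nonneg (mul_nonneg (by linarith) hWp0) _
    have hcr1 : |∑ j, (cz m i j - cz k i j) * (x (m+1) j - x m j)|
        ≤ d * ((M₀*((D*(ω k l)^θ + B*(ω k l)^(1/p))*‖z k‖)
            + M₀*(C₁*(ω k l)^(1/p))^(γ-1)*‖z k‖) * (ω k l)^(1/p)) := by
      apply ea_abs_sum_mul_le d _ _ _ _ _ (fun j => hczdm i j) hxm1
      have h1 := mul_nonneg hM₀.le hvm0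
      have h2 := mul_nonneg (mul_nonneg hM₀.le hcg0) hN0
      have h3 : M₀*(C₁*(ω k l)^(1/p))^(γ-1)*‖z k‖ = M₀*((C₁*(ω k l)^(1/p))^(γ-1)*‖z k‖) := by
        ring
      linarith
    have hcr2 : |∑ j, (cz (m+1) i j - cz k i j) * (x l j - x (m+1) j)|
        ≤ d * ((M₀*(((1+B)*D*(ω k l)^θ + (2*B+B^2)*(ω k l)^(1/p))*‖z k‖)
            + M₀*(C₁*(ω k l)^(1/p))^(γ-1)*‖z k‖) * (ω k l)^(1/p)) := by
      apply ea_abs_sum_mul_le d _ _ _ _ _ (fun j => hczdm1 i j) hxl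
      have h1 := mul_nonneg hM₀.le hvm10
      have h2 := mul_nonneg (mul_nonneg hM₀.le hcg0) hN0
      linarith
    -- J contributions
    have hc1 : |eaJ x cz z k m i| ≤ D*‖z k‖*(ω k l / 2)^θ :=
      le_trans (hJkm i) (mul_le_mul_of_nonneg_left hhθ1 (mul_nonneg hD0.le hN0))
    have hc2 : |eaJ x cz z (m+1) l i|
        ≤ D*‖z k‖*(ω k l / 2)^θ
          + D*(((1+B)*D*(ω k l)^θ + (2*B+B^2)*(ω k l)^(1/p))*‖z k‖)*(ω k l)^θ := by
      have h1 := hJm1l i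
      have h2 : D * ‖z (m+1)‖ * (ω (m+1) l)^θ ≤ D * ‖z (m+1)‖ * (ω k l / 2)^θ :=
        mul_le_mul_of_nonneg_left hhθ2 (mul_nonneg hD0.le (norm_nonneg _))
      have h3 : D * ‖z (m+1)‖ * (ω k l / 2)^θ
          ≤ D * (‖z k‖ + ((1+B)*D*(ω k l)^θ + (2*B+B^2)*(ω k l)^(1/p))*‖z k‖)
            * (ω k l / 2)^θ := by
        apply mul_le_mul_of_nonneg_right _ (Real.rpow_nonneg hhalf0 _)
        exact mul_le_mul_of_nonneg_left hzm1N hD0.le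
      have h4 : D * (‖z k‖ + ((1+B)*D*(ω k l)^θ + (2*B+B^2)*(ω k l)^(1/p))*‖z k‖)
            * (ω k l / 2)^θ
          = D*‖z k‖*(ω k l / 2)^θ
            + D*(((1+B)*D*(ω k l)^θ + (2*B+B^2)*(ω k l)^(1/p))*‖z k‖)*(ω k l / 2)^θ := by
        ring
      have h5 : D*(((1+B)*D*(ω k l)^θ + (2*B+B^2)*(ω k l)^(1/p))*‖z k‖)*(ω k l / 2)^θ
          ≤ D*(((1+B)*D*(ω k l)^θ + (2*B+B^2)*(ω k l)^(1/p))*‖z k‖)*(ω k l)^θ := by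
        apply mul_le_mul_of_nonneg_left hhalfle
        exact mul_nonneg hD0.le hvm10
      linarith
    -- key numeric bound for the extra terms
    have hkeyB : D*(((1+B)*D*(ω k l)^θ + (2*B+B^2)*(ω k l)^(1/p))*‖z k‖)*(ω k l)^θ
          + d * ((M₀*((D*(ω k l)^θ + B*(ω k l)^(1/p))*‖z k‖)
            + M₀*(C₁*(ω k l)^(1/p))^(γ-1)*‖z k‖) * (ω k l)^(1/p))
          + d * ((M₀*(((1+B)*D*(ω k l)^θ + (2*B+B^2)*(ω k l)^(1/p))*‖z k‖)
            + M₀*(C₁*(ω k l)^(1/p))^(γ-1)*‖z k‖) * (ω k l)^(1/p))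
        ≤ κ * (D*‖z k‖*(ω k l)^θ) := by
      have hA10 : (0:ℝ) ≤ (1+B)*D := mul_nonneg (by linarith) hD0.le
      have hA20 : (0:ℝ) ≤ 2*B+B^2 := by positivity
      have hdm : (0:ℝ) ≤ (d:ℝ)*M₀ := mul_nonneg (Nat.cast_nonneg d) hM₀.le
      have hLp0 : 0 ≤ L'^(1/p) := Real.rpow_nonneg hL'0.le _
      have hWθWp : (ω k l)^θ*(ω k l)^(1/p) ≤ L'^(1/p)*(ω k l)^θ := by
        calc (ω k l)^θ*(ω k l)^(1/p) ≤ (ω k l)^θ*L'^(1/p) :=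
              mul_le_mul_of_nonneg_left hWpL' hWθ0
          _ = L'^(1/p)*(ω k l)^θ := by ring
      have hWθθ : (ω k l)^θ*(ω k l)^θ ≤ L'^(1/p)*(ω k l)^θ := by
        calc (ω k l)^θ*(ω k l)^θ ≤ (ω k l)^θ*(ω k l)^(1/p) :=
              mul_le_mul_of_nonneg_left hWθp hWθ0
          _ ≤ L'^(1/p)*(ω k l)^θ := hWθWp
      have hexp2 : (1/p)*(γ-1) + 1/p = θ := by rw [hθdef]; field_simp; ring
      have hne4 : (1/p)*(γ-1) + 1/p ≠ 0 := by
        have h1 : 0 ≤ (1/p)*(γ-1) := mul_nonneg hip0.le hgm1.le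
        exact ne_of_gt (by linarith)
      have hCgWp : (C₁*(ω k l)^(1/p))^(γ-1)*(ω k l)^(1/p) = C₁^(γ-1)*(ω k l)^θ := by
        rw [Real.mul_rpow (by linarith : (0:ℝ) ≤ C₁) hWp0, ← Real.rpow_mul hW0,
          mul_assoc, ← Real.rpow_add' hW0 hne4, hexp2]
      have hC₁g : C₁^(γ-1) ≤ C₁+1 :=
        ea_rpow_le_add_one C₁ (γ-1) (by linarith) hgm1.le hgm1'
      have hCgWp' : (C₁*(ω k l)^(1/p))^(γ-1)*(ω k l)^(1/p) ≤ (C₁+1)*(ω k l)^θ := by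
        rw [hCgWp]; exact mul_le_mul_of_nonneg_right hC₁g hWθ0
      -- grouping equalities
      have eq1 : D*(((1+B)*D*(ω k l)^θ + (2*B+B^2)*(ω k l)^(1/p))*‖z k‖)*(ω k l)^θ
          = ((1+B)*D)*D*‖z k‖*((ω k l)^θ*(ω k l)^θ)
            + (2*B+B^2)*D*‖z k‖*((ω k l)^θ*(ω k l)^(1/p)) := by ring
      have eq2 : (d:ℝ) * ((M₀*((D*(ω k l)^θ + B*(ω k l)^(1/p))*‖z k‖)
            + M₀*(C₁*(ω k l)^(1/p))^(γ-1)*‖z k‖) * (ω k l)^(1/p))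
          = ((d:ℝ)*M₀)*D*‖z k‖*((ω k l)^θ*(ω k l)^(1/p))
            + ((d:ℝ)*M₀)*B*‖z k‖*((ω k l)^(1/p)*(ω k l)^(1/p))
            + ((d:ℝ)*M₀)*‖z k‖*((C₁*(ω k l)^(1/p))^(γ-1)*(ω k l)^(1/p)) := by ring
      have eq3 : (d:ℝ) * ((M₀*(((1+B)*D*(ω k l)^θ + (2*B+B^2)*(ω k l)^(1/p))*‖z k‖)
            + M₀*(C₁*(ω k l)^(1/p))^(γ-1)*‖z k‖) * (ω k l)^(1/p))
          = ((d:ℝ)*M₀)*((1+B)*D)*‖z k‖*((ω k l)^θ*(ω k l)^(1/p))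
            + ((d:ℝ)*M₀)*(2*B+B^2)*‖z k‖*((ω k l)^(1/p)*(ω k l)^(1/p))
            + ((d:ℝ)*M₀)*‖z k‖*((C₁*(ω k l)^(1/p))^(γ-1)*(ω k l)^(1/p)) := by ring
      -- individual monomial bounds
      have g1 : ((1+B)*D)*D*‖z k‖*((ω k l)^θ*(ω k l)^θ)
          ≤ ((1+B)*D)*D*‖z k‖*(L'^(1/p)*(ω k l)^θ) :=
        mul_le_mul_of_nonneg_left hWθθ
          (mul_nonneg (mul_nonneg hA10 hD0.le) hN0)
      have g2 : (2*B+B^2)*D*‖z k‖*((ω k l)^θ*(ω k l)^(1/p))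
          ≤ (2*B+B^2)*D*‖z k‖*(L'^(1/p)*(ω k l)^θ) :=
        mul_le_mul_of_nonneg_left hWθWp
          (mul_nonneg (mul_nonneg hA20 hD0.le) hN0)
      have g3 : ((d:ℝ)*M₀)*D*‖z k‖*((ω k l)^θ*(ω k l)^(1/p))
          ≤ ((d:ℝ)*M₀)*D*‖z k‖*(L'^(1/p)*(ω k l)^θ) :=
        mul_le_mul_of_nonneg_left hWθWp
          (mul_nonneg (mul_nonneg hdm hD0.le) hN0)
      have g4 : ((d:ℝ)*M₀)*B*‖z k‖*((ω k l)^(1/p)*(ω k l)^(1/p))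
          ≤ ((d:ℝ)*M₀)*B*‖z k‖*(ω k l)^θ :=
        mul_le_mul_of_nonneg_left hWpp
          (mul_nonneg (mul_nonneg hdm hB0) hN0)
      have g5 : ((d:ℝ)*M₀)*‖z k‖*((C₁*(ω k l)^(1/p))^(γ-1)*(ω k l)^(1/p))
          ≤ ((d:ℝ)*M₀)*‖z k‖*((C₁+1)*(ω k l)^θ) :=
        mul_le_mul_of_nonneg_left hCgWp' (mul_nonneg hdm hN0)
      have g6 : ((d:ℝ)*M₀)*((1+B)*D)*‖z k‖*((ω k l)^θ*(ω k l)^(1/p))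
          ≤ ((d:ℝ)*M₀)*((1+B)*D)*‖z k‖*(L'^(1/p)*(ω k l)^θ) :=
        mul_le_mul_of_nonneg_left hWθWp
          (mul_nonneg (mul_nonneg hdm hA10) hN0)
      have g7 : ((d:ℝ)*M₀)*(2*B+B^2)*‖z k‖*((ω k l)^(1/p)*(ω k l)^(1/p))
          ≤ ((d:ℝ)*M₀)*(2*B+B^2)*‖z k‖*(ω k l)^θ :=
        mul_le_mul_of_nonneg_left hWpp
          (mul_nonneg (mul_nonneg hdm hA20) hN0)
      -- the damped group
      have eqG : ((1+B)*D)*D + (2*B+B^2)*D + ((d:ℝ)*M₀)*D + ((d:ℝ)*M₀)*((1+B)*D)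
          = D*G := by rw [hGdef, hBdef]; ring
      have gG : (((1+B)*D)*D + (2*B+B^2)*D + ((d:ℝ)*M₀)*D + ((d:ℝ)*M₀)*((1+B)*D))
            * (‖z k‖*(L'^(1/p)*(ω k l)^θ))
          ≤ (κ/2) * (D*‖z k‖*(ω k l)^θ) := by
        rw [eqG]
        have h1 : D*G*(‖z k‖*(L'^(1/p)*(ω k l)^θ))
            = (G*L'^(1/p)) * (D*‖z k‖*(ω k l)^θ) := by ring
        rw [h1]
        exact mul_le_mul_of_nonneg_right hGL'
          (mul_nonneg (mul_nonneg hD0.le hN0) hWθ0)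
      -- the undamped group
      have hκD : κ*D = 2*((d:ℝ)*M₀*(3*B+B^2) + 2*((d:ℝ)*M₀)*(C₁+1)) + κ := by
        have hkd : κ * (2/κ) = 2 := by field_simp
        calc κ*D = (κ*(2/κ)) * ((d:ℝ)*M₀*(3*B+B^2) + 2*(d:ℝ)*M₀*(C₁+1)) + κ := by
              rw [hDdef]; ring
          _ = 2*((d:ℝ)*M₀*(3*B+B^2) + 2*((d:ℝ)*M₀)*(C₁+1)) + κ := by rw [hkd]; ring
      have gD : (((d:ℝ)*M₀)*B + ((d:ℝ)*M₀)*(C₁+1) + ((d:ℝ)*M₀)*(2*B+B^2)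
            + ((d:ℝ)*M₀)*(C₁+1)) * (‖z k‖*(ω k l)^θ)
          ≤ (κ/2) * (D*‖z k‖*(ω k l)^θ) := by
        have u1 : ((d:ℝ)*M₀)*B + ((d:ℝ)*M₀)*(C₁+1) + ((d:ℝ)*M₀)*(2*B+B^2)
            + ((d:ℝ)*M₀)*(C₁+1) ≤ (κ/2)*D := by
          have h1 : (0:ℝ) ≤ κ := hκ0.le
          linarith [hκD]
        have u2 := mul_le_mul_of_nonneg_right u1 (mul_nonneg hN0 hWθ0)
        calc (((d:ℝ)*M₀)*B + ((d:ℝ)*M₀)*(C₁+1) + ((d:ℝ)*M₀)*(2*B+B^2)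
              + ((d:ℝ)*M₀)*(C₁+1)) * (‖z k‖*(ω k l)^θ)
            ≤ ((κ/2)*D) * (‖z k‖*(ω k l)^θ) := u2
          _ = (κ/2) * (D*‖z k‖*(ω k l)^θ) := by ring
      linarith [eq1, eq2, eq3, g1, g2, g3, g4, g5, g6, g7, gG, gD]
    -- final assembly
    have hsplit2 : eaJ x cz z k l i
        = eaJ x cz z k m i + eaJ x cz z m (m+1) i + eaJ x cz z (m+1) l i
          + (∑ j, (cz m i j - cz k i j)*(x (m+1) j - x m j))
          + (∑ j, (cz (m+1) i j - cz k i j)*(x l j - x (m+1) j)) := by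
      rw [eaJ_split x cz z k (m+1) l i, eaJ_split x cz z k m (m+1) i]; ring
    rw [hsplit2, hJzstep m i]
    have habs : |eaJ x cz z k m i + 0 + eaJ x cz z (m+1) l i
          + (∑ j, (cz m i j - cz k i j)*(x (m+1) j - x m j))
          + (∑ j, (cz (m+1) i j - cz k i j)*(x l j - x (m+1) j))|
        ≤ |eaJ x cz z k m i| + |eaJ x cz z (m+1) l i|
          + |∑ j, (cz m i j - cz k i j)*(x (m+1) j - x m j)|
          + |∑ j, (cz (m+1) i j - cz k i j)*(x l j - x (m+1) j)| := by
      have a1 := abs_add_le (eaJ x cz z k m i + 0 + eaJ x cz z (m+1) l i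
          + (∑ j, (cz m i j - cz k i j)*(x (m+1) j - x m j)))
        (∑ j, (cz (m+1) i j - cz k i j)*(x l j - x (m+1) j))
      have a2 := abs_add_le (eaJ x cz z k m i + 0 + eaJ x cz z (m+1) l i)
        (∑ j, (cz m i j - cz k i j)*(x (m+1) j - x m j))
      have a3 := abs_add_le (eaJ x cz z k m i + 0) (eaJ x cz z (m+1) l i)
      have a4 : |eaJ x cz z k m i + 0| = |eaJ x cz z k m i| := by rw [add_zero]
      linarith
    have h2halfD : 2*(D*‖z k‖*(ω k l / 2)^θ) = D*‖z k‖*((1-κ)*(ω k l)^θ) := by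
      rw [show 2*(D*‖z k‖*(ω k l / 2)^θ) = D*‖z k‖*(2*(ω k l/2)^θ) from by ring, h2half]
    have hfin2 : D*‖z k‖*((1-κ)*(ω k l)^θ) + κ*(D*‖z k‖*(ω k l)^θ)
        = D*‖z k‖*(ω k l)^θ := by ring
    calc |eaJ x cz z k m i + 0 + eaJ x cz z (m+1) l i
          + (∑ j, (cz m i j - cz k i j)*(x (m+1) j - x m j))
          + (∑ j, (cz (m+1) i j - cz k i j)*(x l j - x (m+1) j))|
        ≤ |eaJ x cz z k m i| + |eaJ x cz z (m+1) l i|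
          + |∑ j, (cz m i j - cz k i j)*(x (m+1) j - x m j)|
          + |∑ j, (cz (m+1) i j - cz k i j)*(x l j - x (m+1) j)| := habs
      _ ≤ D*‖z k‖*(ω k l)^θ := by linarith [hc1, hc2, hcr1, hcr2, hkeyB, h2halfD, hfin2]
  -- block estimate
  have hZ : ∀ k l, k ≤ l → l ≤ K → ω k l ≤ L' → ‖z l‖ ≤ F * ‖z k‖ := by
    intro k l hkl hlK hωL'
    have hW0 : 0 ≤ ω k l := hωnn k l hkl hlK
    have hW1 : ω k l ≤ 1 := le_trans hωL' hL'1
    have hθle : (ω k l) ^ θ ≤ 1 := Real.rpow_le_one hW0 hW1 hθ0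
    have hple : (ω k l) ^ (1/p) ≤ 1 := Real.rpow_le_one hW0 hW1 hip0.le
    have hzk0 : (0:ℝ) ≤ ‖z k‖ := norm_nonneg _
    have hBz : (0:ℝ) ≤ B * ‖z k‖ := mul_nonneg hB0 hzk0
    have hDz : (0:ℝ) ≤ D * ‖z k‖ := mul_nonneg hD0.le hzk0
    have hcomp : ∀ i, |z l i| ≤ (1 + D + B) * ‖z k‖ := by
      intro i
      have hJ := hJz (l - k) k l hkl hlK rfl hωL' i
      have hS := ea_abs_sum_mul_le d (fun j => cz k i j) (fun j => x l j - x k j)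
        (M₀ * ‖z k‖) ((ω k l) ^ (1/p)) (mul_nonneg hM₀.le hzk0) (fun j => hczb k i j)
        (fun j => hxb k l hkl hlK j)
      have hid : z l i = z k i + eaJ x cz z k l i + ∑ j, cz k i j * (x l j - x k j) := by
        simp only [eaJ]; ring
      have hzki : |z k i| ≤ ‖z k‖ := by
        have h := norm_le_pi_norm (z k) i; rwa [Real.norm_eq_abs] at h
      have h1 : |eaJ x cz z k l i| ≤ D * ‖z k‖ := by
        calc |eaJ x cz z k l i| ≤ D * ‖z k‖ * (ω k l)^θ := hJ
          _ ≤ D * ‖z k‖ * 1 := mul_le_mul_of_nonneg_left hθle hDz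
          _ = D * ‖z k‖ := by ring
      have h2 : |∑ j, cz k i j * (x l j - x k j)| ≤ B * ‖z k‖ := by
        calc |∑ j, cz k i j * (x l j - x k j)| ≤ d * ((M₀ * ‖z k‖) * (ω k l)^(1/p)) := hS
          _ ≤ d * ((M₀ * ‖z k‖) * 1) := by
              apply mul_le_mul_of_nonneg_left _ (Nat.cast_nonneg d)
              exact mul_le_mul_of_nonneg_left hple (mul_nonneg hM₀.le hzk0)
          _ = B * ‖z k‖ := by rw [hBdef]; ring
      have htri : |z k i + eaJ x cz z k l i + ∑ j, cz k i j * (x l j - x k j)|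
          ≤ |z k i| + |eaJ x cz z k l i| + |∑ j, cz k i j * (x l j - x k j)| := by
        have ha := abs_add_le (z k i + eaJ x cz z k l i) (∑ j, cz k i j * (x l j - x k j))
        have hb := abs_add_le (z k i) (eaJ x cz z k l i)
        linarith
      calc |z l i| = |z k i + eaJ x cz z k l i + ∑ j, cz k i j * (x l j - x k j)| := by
            rw [← hid]
        _ ≤ |z k i| + |eaJ x cz z k l i| + |∑ j, cz k i j * (x l j - x k j)| := htri
        _ ≤ ‖z k‖ + D*‖z k‖ + B*‖z k‖ := by linarith
        _ = (1 + D + B) * ‖z k‖ := by ring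
    have hco : (0:ℝ) ≤ (1 + D + B) * ‖z k‖ := mul_nonneg (by linarith) hzk0
    have hnorm : ‖z l‖ ≤ (1 + D + B) * ‖z k‖ := by
      rw [pi_norm_le_iff_of_nonneg hco]
      intro i; rw [Real.norm_eq_abs]; exact hcomp i
    calc ‖z l‖ ≤ (1 + D + B) * ‖z k‖ := hnorm
      _ ≤ F * ‖z k‖ := by
          apply mul_le_mul_of_nonneg_right _ hzk0
          have h1 : 0 ≤ B * Ω^(1/p) := mul_nonneg hB0 (Real.rpow_nonneg hΩ _)
          rw [hFdef]; linarith
  -- crude one-step estimate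
  have hZstep : ∀ m, m + 1 ≤ K → ‖z (m+1)‖ ≤ F * ‖z m‖ := by
    intro m hm
    have hωm : ω m (m+1) ≤ Ω :=
      le_trans (hmono 0 m (m+1) K (Nat.zero_le _) (Nat.le_succ _) hm le_rfl) hωΩ
    have hω0 : 0 ≤ ω m (m+1) := hωnn m (m+1) (Nat.le_succ _) hm
    have hrp : (ω m (m+1))^(1/p) ≤ Ω^(1/p) := Real.rpow_le_rpow hω0 hωm hip0.le
    have hzm0 : (0:ℝ) ≤ ‖z m‖ := norm_nonneg _
    have hcomp : ∀ i, |z (m+1) i| ≤ (1 + B * Ω^(1/p)) * ‖z m‖ := by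
      intro i
      have h1 := hzstep m hm i
      have hzmi : |z m i| ≤ ‖z m‖ := by
        have h := norm_le_pi_norm (z m) i; rwa [Real.norm_eq_abs] at h
      have h2 : B * ‖z m‖ * (ω m (m+1))^(1/p) ≤ B * ‖z m‖ * Ω^(1/p) :=
        mul_le_mul_of_nonneg_left hrp (mul_nonneg hB0 hzm0)
      have habs : |z (m+1) i| ≤ |z m i| + |z (m+1) i - z m i| := by
        have h3 := abs_add_le (z m i) (z (m+1) i - z m i)
        have h4 : z m i + (z (m+1) i - z m i) = z (m+1) i := by ring
        rw [h4] at h3; exact h3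
      calc |z (m+1) i| ≤ |z m i| + |z (m+1) i - z m i| := habs
        _ ≤ ‖z m‖ + B * ‖z m‖ * Ω^(1/p) := by linarith
        _ = (1 + B * Ω^(1/p)) * ‖z m‖ := by ring
    have hco : (0:ℝ) ≤ (1 + B * Ω^(1/p)) * ‖z m‖ := by
      have h1 : 0 ≤ B * Ω^(1/p) := mul_nonneg hB0 (Real.rpow_nonneg hΩ _)
      exact mul_nonneg (by linarith) hzm0
    have hnorm : ‖z (m+1)‖ ≤ (1 + B * Ω^(1/p)) * ‖z m‖ := by
      rw [pi_norm_le_iff_of_nonneg hco]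
      intro i; rw [Real.norm_eq_abs]; exact hcomp i
    calc ‖z (m+1)‖ ≤ (1 + B * Ω^(1/p)) * ‖z m‖ := hnorm
      _ ≤ F * ‖z m‖ := by
          apply mul_le_mul_of_nonneg_right _ hzm0
          rw [hFdef]; linarith
  -- chaining
  have chain : ∀ j : ℕ, ∀ k l, k ≤ l → l ≤ K → ω k l ≤ ((j:ℝ)+1) * L' →
      ‖z l‖ ≤ F ^ (2*j+1) * ‖z k‖ := by
    intro j
    induction j with
    | zero =>
      intro k l hkl hlK hb
      have hb' : ω k l ≤ L' := by push_cast at hb; linarith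
      calc ‖z l‖ ≤ F * ‖z k‖ := hZ k l hkl hlK hb'
        _ = F ^ (2*0+1) * ‖z k‖ := by norm_num
    | succ j IHj =>
      intro k l hkl hlK hb
      by_cases hsm : ω k l ≤ L'
      · have h1 := hZ k l hkl hlK hsm
        have h2 : F ≤ F ^ (2*(j+1)+1) := by
          calc F = F ^ 1 := (pow_one F).symm
            _ ≤ F ^ (2*(j+1)+1) := pow_le_pow_right₀ hF1 (by omega)
        calc ‖z l‖ ≤ F * ‖z k‖ := h1
          _ ≤ F ^ (2*(j+1)+1) * ‖z k‖ := mul_le_mul_of_nonneg_right h2 (norm_nonneg _)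
      · have hPk : k ≤ k ∧ ω k k ≤ L' := ⟨le_rfl, by
          rw [hKK (le_trans hkl hlK)]; exact hL'0.le⟩
        obtain ⟨hkm, hωkm⟩ :=
          Nat.findGreatest_spec (P := fun m' => k ≤ m' ∧ ω k m' ≤ L') hkl hPk
        have hml : Nat.findGreatest (fun m' => k ≤ m' ∧ ω k m' ≤ L') l ≤ l :=
          Nat.findGreatest_le l
        set m := Nat.findGreatest (fun m' => k ≤ m' ∧ ω k m' ≤ L') l with hmdef
        have hmltl : m < l := by
          rcases eq_or_lt_of_le hml with he | hlt
          · exact absurd (he ▸ hωkm) hsm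
          · exact hlt
        have hm1l : m + 1 ≤ l := hmltl
        have hm1K : m + 1 ≤ K := le_trans hm1l hlK
        have hnP : ¬ (k ≤ m + 1 ∧ ω k (m+1) ≤ L') :=
          Nat.findGreatest_is_greatest (P := fun m' => k ≤ m' ∧ ω k m' ≤ L')
            (by omega) hm1l
        have hωk1 : L' < ω k (m+1) := by
          by_contra hle
          exact hnP ⟨by omega, le_of_not_gt hle⟩
        have hω2 : ω (m+1) l ≤ ((j:ℝ)+1) * L' := by
          have hadd := hωadd k (m+1) l (by omega) hm1l hlK
          push_cast at hb ⊢
          linarith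
        have h1 := hZ k m hkm (le_trans hml hlK) hωkm
        have h2 := hZstep m hm1K
        have h3 := IHj (m+1) l hm1l hlK hω2
        have hF2 : (0:ℝ) ≤ F ^ (2*j+1) := le_of_lt (pow_pos hF0 _)
        calc ‖z l‖ ≤ F ^ (2*j+1) * ‖z (m+1)‖ := h3
          _ ≤ F ^ (2*j+1) * (F * ‖z m‖) := mul_le_mul_of_nonneg_left h2 hF2
          _ ≤ F ^ (2*j+1) * (F * (F * ‖z k‖)) := by
              apply mul_le_mul_of_nonneg_left _ hF2
              exact mul_le_mul_of_nonneg_left h1 hF0.le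
          _ = F ^ (2*(j+1)+1) * ‖z k‖ := by
              rw [show 2*(j+1)+1 = (2*j+1)+1+1 from by omega, pow_succ, pow_succ]; ring
  -- conclusion
  intro k hk i
  have h1 : ω 0 k ≤ Ω := by
    rcases eq_or_lt_of_le hk with rfl | hlt
    · linarith
    · have ha := hωadd 0 k K (Nat.zero_le _) hk le_rfl
      have hb := hωnn k K hk le_rfl
      linarith
  have hceil : Ω / L' ≤ (j₀:ℝ) := by rw [hj₀def]; exact Nat.le_ceil _
  have h2 : Ω ≤ (j₀:ℝ) * L' := by
    rw [div_le_iff₀ hL'0] at hceil; linarith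
  have h3 : ω 0 k ≤ ((j₀:ℝ)+1) * L' := by
    have he : ((j₀:ℝ)+1) * L' = (j₀:ℝ)*L' + L' := by ring
    linarith
  have h4 := chain j₀ 0 k (Nat.zero_le _) hk h3
  have h5 : |yt k i - y k i| ≤ ‖z k‖ := by
    have h := norm_le_pi_norm (z k) i
    rw [Real.norm_eq_abs, hzapp] at h
    exact h
  calc |yt k i - y k i| ≤ ‖z k‖ := h5
    _ ≤ F ^ (2*j₀+1) * ‖z 0‖ := h4
    _ = F ^ (2*j₀+1) * ‖yt 0 - y 0‖ := by rw [hz]
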